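/- SGD on strongly convex functions: assume each f_i is convex and L_i-smooth with L_max = max_i L_i, f = (1/m)∑ f_i is μ-strongly convex with minimizer θ*, and the gradient variance is bounded: E‖∇f_i(θ) - ∇f(θ)‖² ≤ σ² for all θ. If SGD is run with constant step size 0 < α < 1/(2L_max), then for all k ≥ 1, E‖θ_k - θ*‖² ≤ (1 - αμ)^k ‖θ_0 - θ*‖² + (2α/μ)σ². -/

import Mathlib

open InnerProductSpace intervalIntegral

lemma descent_lemma {E : Type*} [NormedAddCommGroup E] [InnerProductSpace ℝ E] [CompleteSpace E]
    {h : E → ℝ} (hd : Differentiable ℝ h) {C : ℝ}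
    (hcont : Continuous (fun z => gradient h z))
    (hlip : ∀ a b, ‖gradient h a - gradient h b‖ ≤ C * ‖a - b‖) (x y : E) :
    h y ≤ h x + (inner ℝ (gradient h x) (y - x) : ℝ) + C / 2 * ‖y - x‖ ^ 2 := by
  set v := y - x with hv
  have hline : ∀ t : ℝ, HasDerivAt (fun s : ℝ => h (x + s • v))
      ((inner ℝ (gradient h (x + t • v)) v : ℝ)) t := by
    intro t
    have h1 : HasDerivAt (fun s : ℝ => x + s • v) v t := by
      simpa using ((hasDerivAt_id t).smul_const v).const_add x
    have h2 : HasFDerivAt h (InnerProductSpace.toDual ℝ E (gradient h (x + t • v))) (x + t • v) :=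
      (hd _).hasGradientAt.hasFDerivAt
    simpa [InnerProductSpace.toDual_apply_apply, Function.comp_def] using h2.comp_hasDerivAt t h1
  have hcont' : Continuous fun t : ℝ => (inner ℝ (gradient h (x + t • v)) v : ℝ) :=
    (hcont.comp (continuous_const.add (continuous_id.smul continuous_const))).inner
      continuous_const
  have key : h (x + (1:ℝ) • v) - h (x + (0:ℝ) • v)
      = ∫ t in (0:ℝ)..1, (inner ℝ (gradient h (x + t • v)) v : ℝ) :=
    (intervalIntegral.integral_eq_sub_of_hasDerivAt (fun t _ => hline t)
      (hcont'.intervalIntegrable 0 1)).symm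
  have hbound : ∀ t ∈ Set.Icc (0:ℝ) 1,
      (inner ℝ (gradient h (x + t • v)) v : ℝ)
        ≤ (inner ℝ (gradient h x) v : ℝ) + (C * ‖v‖ ^ 2) * t := by
    intro t ht
    have e1 : (inner ℝ (gradient h (x + t • v)) v : ℝ)
        = (inner ℝ (gradient h x) v : ℝ) + (inner ℝ (gradient h (x + t • v) - gradient h x) v : ℝ) := by
      rw [inner_sub_left]; ring
    rw [e1]
    have e2 : (inner ℝ (gradient h (x + t • v) - gradient h x) v : ℝ)
        ≤ ‖gradient h (x + t • v) - gradient h x‖ * ‖v‖ := real_inner_le_norm _ _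
    have e3 : ‖gradient h (x + t • v) - gradient h x‖ ≤ C * (t * ‖v‖) := by
      have := hlip (x + t • v) x
      simpa [norm_smul, abs_of_nonneg ht.1] using this
    nlinarith [norm_nonneg v, norm_nonneg (gradient h (x + t • v) - gradient h x)]
  have hint : (∫ t in (0:ℝ)..1, (inner ℝ (gradient h (x + t • v)) v : ℝ))
      ≤ ∫ t in (0:ℝ)..1, ((inner ℝ (gradient h x) v : ℝ) + (C * ‖v‖ ^ 2) * t) :=
    intervalIntegral.integral_mono_on zero_le_one (hcont'.intervalIntegrable 0 1)
      ((continuous_const.add (continuous_const.mul continuous_id)).intervalIntegrable 0 1) hbound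
  have hval : (∫ t in (0:ℝ)..1, ((inner ℝ (gradient h x) v : ℝ) + (C * ‖v‖ ^ 2) * t))
      = (inner ℝ (gradient h x) v : ℝ) + C * ‖v‖ ^ 2 / 2 := by
    rw [intervalIntegral.integral_add intervalIntegrable_const
      ((continuous_mul_left (C * ‖v‖ ^ 2)).intervalIntegrable 0 1),
      intervalIntegral.integral_const_mul, integral_id]
    simp
    ring
  have e0 : x + (1:ℝ) • v = y := by rw [hv]; simp
  have e1 : x + (0:ℝ) • v = x := by simp
  rw [e0, e1] at key
  rw [hval] at hint
  linarith



/-- SGD iterates after `k` steps, as a function of the sequence of sampled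
indices `ω : Fin k → Fin m`; `g i` is the gradient of the `i`-th sample loss. -/
noncomputable def sgdIter {n m : ℕ}
    (g : Fin m → EuclideanSpace ℝ (Fin n) → EuclideanSpace ℝ (Fin n))
    (α : ℝ) (θ0 : EuclideanSpace ℝ (Fin n)) :
    (k : ℕ) → (Fin k → Fin m) → EuclideanSpace ℝ (Fin n)
  | 0, _ => θ0
  | (k + 1), ω =>
      sgdIter g α θ0 k (fun j => ω j.castSucc)
        - α • g (ω (Fin.last k)) (sgdIter g α θ0 k (fun j => ω j.castSucc))

set_option maxHeartbeats 2000000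

/-- Convergence of SGD with constant step size on a strongly convex smooth
finite-sum objective: `E‖θ_k - θ*‖² ≤ (1-αμ)^k ‖θ0 - θ*‖² + (2α/μ)σ²`, where
the expectation is over the i.i.d. uniform index sequences. -/
theorem sgd_strongly_convex_convergence (n m : ℕ) (hm : 0 < m)
    (f : Fin m → EuclideanSpace ℝ (Fin n) → ℝ)
    (F : EuclideanSpace ℝ (Fin n) → ℝ)
    (hF : F = fun θ => (m : ℝ)⁻¹ * ∑ i, f i θ)
    (hdiff : ∀ i, Differentiable ℝ (f i))
    (hconv : ∀ i, ConvexOn ℝ Set.univ (f i))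
    (L : Fin m → NNReal)
    (hsmooth : ∀ i, LipschitzWith (L i) (gradient (f i)))
    (Lmax : ℝ) (hLmax : Lmax = ↑(Finset.univ.sup L))
    (μ : ℝ) (hμ : 0 < μ)
    (hstrong : ∀ θ1 θ2 : EuclideanSpace ℝ (Fin n),
      F θ1 + (inner ℝ (gradient F θ1) (θ2 - θ1) : ℝ) + μ / 2 * ‖θ1 - θ2‖ ^ 2 ≤ F θ2)
    (θs : EuclideanSpace ℝ (Fin n)) (hmin : ∀ θ, F θs ≤ F θ)
    (σ : ℝ)
    (hvar : ∀ θ, (m : ℝ)⁻¹ * ∑ i, ‖gradient (f i) θ - gradient F θ‖ ^ 2 ≤ σ ^ 2)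
    (α : ℝ) (hα : 0 < α) (hα2 : α < 1 / (2 * Lmax))
    (θ0 : EuclideanSpace ℝ (Fin n)) :
    ∀ k, 1 ≤ k →
      ((m : ℝ) ^ k)⁻¹ *
        ∑ ω : Fin k → Fin m,
          ‖sgdIter (fun i => gradient (f i)) α θ0 k ω - θs‖ ^ 2
      ≤ (1 - α * μ) ^ k * ‖θ0 - θs‖ ^ 2 + (2 * α / μ) * σ ^ 2 := by
  intro k hk
  have hm' : (0:ℝ) < m := by exact_mod_cast hm
  have hσ : (0:ℝ) ≤ σ ^ 2 := le_trans (by positivity) (hvar θ0)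
  rcases subsingleton_or_nontrivial (EuclideanSpace ℝ (Fin n)) with hsub | hnt
  · have h0 : ∀ x : EuclideanSpace ℝ (Fin n), x - θs = 0 := fun x => Subsingleton.elim _ _
    have h1 : ∀ ω : Fin k → Fin m,
        ‖sgdIter (fun i => gradient (f i)) α θ0 k ω - θs‖ ^ 2 = 0 := by
      intro ω; rw [h0]; simp
    rw [Finset.sum_congr rfl (fun ω _ => h1 ω), h0 θ0]
    simp
    positivity
  -- basic constants
  have hLmax0 : (0:ℝ) ≤ Lmax := by rw [hLmax]; exact NNReal.coe_nonneg _
  have hLpos : 0 < Lmax := by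
    rcases hLmax0.lt_or_eq with h | h
    · exact h
    · exfalso; rw [← h] at hα2; norm_num at hα2; linarith
  have hLi : ∀ i, (L i : ℝ) ≤ Lmax := fun i => by
    rw [hLmax]; exact_mod_cast Finset.le_sup (Finset.mem_univ i)
  have hαL : α * Lmax ≤ 1/2 := by
    rw [lt_div_iff₀ (by positivity)] at hα2
    linarith
  have hFdiff : Differentiable ℝ F := by
    rw [hF]
    exact Differentiable.const_mul (Differentiable.fun_sum fun i _ => hdiff i) _
  have gradF : ∀ θ, gradient F θ = (m:ℝ)⁻¹ • ∑ i, gradient (f i) θ := by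
    intro θ
    apply HasGradientAt.gradient
    rw [hF, hasGradientAt_iff_hasFDerivAt]
    have h1 : HasFDerivAt (fun θ => ∑ i, f i θ)
        (∑ i, InnerProductSpace.toDual ℝ _ (gradient (f i) θ)) θ :=
      HasFDerivAt.fun_sum fun i _ => ((hdiff i θ).hasGradientAt).hasFDerivAt
    have h2 := h1.const_mul ((m:ℝ)⁻¹)
    refine h2.congr_fderiv ?_
    simp [map_smul, map_sum]
  have gradLip : ∀ a b, ‖gradient F a - gradient F b‖ ≤ Lmax * ‖a - b‖ := by
    intro a b
    rw [gradF, gradF, ← smul_sub, ← Finset.sum_sub_distrib, norm_smul]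
    have hbd : ‖∑ i, (gradient (f i) a - gradient (f i) b)‖
        ≤ ∑ _i : Fin m, Lmax * ‖a - b‖ := by
      refine (norm_sum_le _ _).trans (Finset.sum_le_sum fun i _ => ?_)
      have h1 := (hsmooth i).dist_le_mul a b
      rw [dist_eq_norm, dist_eq_norm] at h1
      exact h1.trans (mul_le_mul_of_nonneg_right (hLi i) (norm_nonneg _))
    rw [Finset.sum_const, Finset.card_univ, Fintype.card_fin, nsmul_eq_mul] at hbd
    have hnorm : ‖(m:ℝ)⁻¹‖ = (m:ℝ)⁻¹ := by
      rw [Real.norm_eq_abs, abs_of_nonneg (by positivity)]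
    rw [hnorm]
    calc (m:ℝ)⁻¹ * ‖∑ i, (gradient (f i) a - gradient (f i) b)‖
        ≤ (m:ℝ)⁻¹ * ((m:ℝ) * (Lmax * ‖a - b‖)) :=
          mul_le_mul_of_nonneg_left hbd (by positivity)
      _ = Lmax * ‖a - b‖ := by field_simp
  have gradFcont : Continuous (gradient F) := by
    have he : (gradient F) = fun θ => (m:ℝ)⁻¹ • ∑ i, gradient (f i) θ := funext gradF
    rw [he]
    exact (continuous_finset_sum _ fun i _ => (hsmooth i).continuous).fun_const_smul _
  have hdesc := descent_lemma hFdiff gradFcont gradLip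
  have hgradsq : ∀ θ, ‖gradient F θ‖ ^ 2 ≤ 2 * Lmax * (F θ - F θs) := by
    intro θ
    have h1 := hdesc θ (θ - Lmax⁻¹ • gradient F θ)
    have h2 : (θ - Lmax⁻¹ • gradient F θ) - θ = -(Lmax⁻¹ • gradient F θ) := by abel
    rw [h2, inner_neg_right, real_inner_smul_right, real_inner_self_eq_norm_sq,
      norm_neg, norm_smul, Real.norm_eq_abs, abs_of_nonneg (by positivity : (0:ℝ) ≤ Lmax⁻¹)]
      at h1
    have h3 := hmin (θ - Lmax⁻¹ • gradient F θ)
    have hsimp : Lmax / 2 * (Lmax⁻¹ * ‖gradient F θ‖) ^ 2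
        = Lmax⁻¹ / 2 * ‖gradient F θ‖ ^ 2 := by
      field_simp
    rw [hsimp] at h1
    have h4 : Lmax⁻¹ / 2 * ‖gradient F θ‖ ^ 2 ≤ F θ - F θs := by linarith
    have h5 := mul_le_mul_of_nonneg_left h4 (by positivity : (0:ℝ) ≤ 2 * Lmax)
    have h6 : 2 * Lmax * (Lmax⁻¹ / 2 * ‖gradient F θ‖ ^ 2) = ‖gradient F θ‖ ^ 2 := by
      field_simp
    linarith
  -- μ ≤ Lmax
  have hμL : μ ≤ Lmax := by
    obtain ⟨v, hv⟩ := exists_ne (0 : EuclideanSpace ℝ (Fin n))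
    have h1 := hstrong θs (θs + v)
    have h2 := hstrong (θs + v) θs
    have e1 : θs + v - θs = v := by abel
    have e2 : θs - (θs + v) = -v := by abel
    rw [e1, e2, norm_neg] at h1
    rw [e1, e2, inner_neg_right] at h2
    have hcs : (inner ℝ (gradient F (θs + v)) v : ℝ) - inner ℝ (gradient F θs) v
        ≤ Lmax * ‖v‖ * ‖v‖ := by
      rw [← inner_sub_left]
      refine (real_inner_le_norm _ _).trans ?_
      have h5 := gradLip (θs + v) θs
      rw [e1] at h5
      exact mul_le_mul_of_nonneg_right h5 (norm_nonneg v)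
    have hvpos : (0:ℝ) < ‖v‖ ^ 2 := by
      have := norm_pos_iff.mpr hv
      positivity
    have hr : Lmax * ‖v‖ * ‖v‖ = Lmax * ‖v‖ ^ 2 := by ring
    rw [hr] at hcs
    nlinarith [hvpos]

  -- one-step expected decrease
  have hsumg : ∀ θ : EuclideanSpace ℝ (Fin n),
      ∑ i, gradient (f i) θ = (m:ℝ) • gradient F θ := by
    intro θ
    rw [gradF, smul_smul, mul_inv_cancel₀ (ne_of_gt hm'), one_smul]
  have onestep : ∀ θ : EuclideanSpace ℝ (Fin n),
      ∑ i, ‖θ - α • gradient (f i) θ - θs‖ ^ 2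
        ≤ (m:ℝ) * ((1 - α * μ) * ‖θ - θs‖ ^ 2 + α ^ 2 * σ ^ 2) := by
    intro θ
    have expand : ∀ i : Fin m, ‖θ - α • gradient (f i) θ - θs‖ ^ 2
        = ‖θ - θs‖ ^ 2 - 2 * α * (inner ℝ (gradient (f i) θ) (θ - θs) : ℝ)
          + α ^ 2 * ‖gradient (f i) θ‖ ^ 2 := by
      intro i
      have e : θ - α • gradient (f i) θ - θs = (θ - θs) - α • gradient (f i) θ := by abel
      rw [e, norm_sub_sq_real, real_inner_smul_right, norm_smul, Real.norm_eq_abs, mul_pow,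
        sq_abs, real_inner_comm]
      ring
    rw [Finset.sum_congr rfl fun i _ => expand i]
    have hinner : ∑ i, (inner ℝ (gradient (f i) θ) (θ - θs) : ℝ)
        = (m:ℝ) * (inner ℝ (gradient F θ) (θ - θs) : ℝ) := by
      rw [← sum_inner, hsumg, real_inner_smul_left]
    have hvarid : ∑ i, ‖gradient (f i) θ - gradient F θ‖ ^ 2
        = (∑ i, ‖gradient (f i) θ‖ ^ 2) - (m:ℝ) * ‖gradient F θ‖ ^ 2 := by
      have e : ∀ i : Fin m, ‖gradient (f i) θ - gradient F θ‖ ^ 2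
          = ‖gradient (f i) θ‖ ^ 2
            - 2 * (inner ℝ (gradient (f i) θ) (gradient F θ) : ℝ) + ‖gradient F θ‖ ^ 2 := by
        intro i; rw [norm_sub_sq_real]
      rw [Finset.sum_congr rfl fun i _ => e i, Finset.sum_add_distrib, Finset.sum_sub_distrib,
        ← Finset.mul_sum, ← sum_inner, hsumg, real_inner_smul_left, real_inner_self_eq_norm_sq,
        Finset.sum_const, Finset.card_univ, Fintype.card_fin, nsmul_eq_mul]
      ring
    have hvar2 : ∑ i, ‖gradient (f i) θ‖ ^ 2
        ≤ (m:ℝ) * σ ^ 2 + (m:ℝ) * ‖gradient F θ‖ ^ 2 := by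
      have h := hvar θ
      have h' : ∑ i, ‖gradient (f i) θ - gradient F θ‖ ^ 2 ≤ (m:ℝ) * σ ^ 2 := by
        have h2 := mul_le_mul_of_nonneg_left h hm'.le
        rwa [← mul_assoc, mul_inv_cancel₀ (ne_of_gt hm'), one_mul] at h2
      linarith [hvarid]
    have hstrongθ : F θ - F θs + μ / 2 * ‖θ - θs‖ ^ 2
        ≤ (inner ℝ (gradient F θ) (θ - θs) : ℝ) := by
      have h := hstrong θ θs
      have e : θs - θ = -(θ - θs) := by abel
      rw [e, inner_neg_right] at h
      linarith
    have hD : 0 ≤ F θ - F θs := by linarith [hmin θ]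
    have hGθ := hgradsq θ
    rw [Finset.sum_add_distrib, Finset.sum_sub_distrib, ← Finset.mul_sum, ← Finset.mul_sum,
      hinner, Finset.sum_const, Finset.card_univ, Fintype.card_fin, nsmul_eq_mul]
    have k1 : α ^ 2 * (∑ i, ‖gradient (f i) θ‖ ^ 2)
        ≤ α ^ 2 * ((m:ℝ) * σ ^ 2 + (m:ℝ) * ‖gradient F θ‖ ^ 2) :=
      mul_le_mul_of_nonneg_left hvar2 (by positivity)
    have k2 : α ^ 2 * ((m:ℝ) * ‖gradient F θ‖ ^ 2)
        ≤ α ^ 2 * ((m:ℝ) * (2 * Lmax * (F θ - F θs))) :=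
      mul_le_mul_of_nonneg_left (mul_le_mul_of_nonneg_left hGθ hm'.le) (by positivity)
    have k3 : 2 * α * ((m:ℝ) * (F θ - F θs + μ / 2 * ‖θ - θs‖ ^ 2))
        ≤ 2 * α * ((m:ℝ) * (inner ℝ (gradient F θ) (θ - θs) : ℝ)) :=
      mul_le_mul_of_nonneg_left (mul_le_mul_of_nonneg_left hstrongθ hm'.le) (by positivity)
    have k4 : α ^ 2 * ((m:ℝ) * (2 * Lmax * (F θ - F θs))) ≤ α * ((m:ℝ) * (F θ - F θs)) := by
      have h0 : (0:ℝ) ≤ 2 * α * ((m:ℝ) * (F θ - F θs)) := by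
        have := mul_nonneg (mul_nonneg hα.le hm'.le) hD
        nlinarith [this]
      have h1 := mul_le_mul_of_nonneg_right hαL h0
      nlinarith [h1]
    have k5 : (0:ℝ) ≤ α * ((m:ℝ) * (F θ - F θs)) :=
      mul_nonneg hα.le (mul_nonneg hm'.le hD)
    nlinarith [k1, k2, k3, k4, k5]

  -- recursion on the expected squared distance
  have hrec : ∀ K : ℕ,
      ((m:ℝ) ^ (K+1))⁻¹ * ∑ ω : Fin (K+1) → Fin m,
          ‖sgdIter (fun i => gradient (f i)) α θ0 (K+1) ω - θs‖ ^ 2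
        ≤ (1 - α * μ) * (((m:ℝ) ^ K)⁻¹ * ∑ ω : Fin K → Fin m,
            ‖sgdIter (fun i => gradient (f i)) α θ0 K ω - θs‖ ^ 2) + α ^ 2 * σ ^ 2 := by
    intro K
    have hsnoc : ∀ (ω : Fin K → Fin m) (i : Fin m),
        sgdIter (fun i => gradient (f i)) α θ0 (K+1) (Fin.snoc ω i)
          = sgdIter (fun i => gradient (f i)) α θ0 K ω
            - α • gradient (f i) (sgdIter (fun i => gradient (f i)) α θ0 K ω) := by
      intro ω i
      have h1 : (fun j : Fin K => (Fin.snoc ω i : Fin (K+1) → Fin m) j.castSucc) = ω := by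
        funext j
        simp
      show sgdIter _ α θ0 (K+1) _ = _
      rw [sgdIter, h1, Fin.snoc_last]
    have hsum : (∑ ω : Fin (K+1) → Fin m,
          ‖sgdIter (fun i => gradient (f i)) α θ0 (K+1) ω - θs‖ ^ 2)
        = ∑ p : Fin m × (Fin K → Fin m),
            ‖sgdIter (fun i => gradient (f i)) α θ0 K p.2
              - α • gradient (f p.1) (sgdIter (fun i => gradient (f i)) α θ0 K p.2) - θs‖ ^ 2 := by
      refine (Fintype.sum_equiv (Fin.snocEquiv (fun _ => Fin m)) _ _ fun p => ?_).symm
      have he : (Fin.snocEquiv (fun _ => Fin m)) p = Fin.snoc p.2 p.1 := by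
        funext j
        rfl
      rw [he, hsnoc]
    rw [hsum, Fintype.sum_prod_type_right]
    have hcard : (Finset.univ : Finset (Fin K → Fin m)).card = m ^ K := by
      simp [Finset.card_univ]
    have hle : ∑ ω : Fin K → Fin m, ∑ i : Fin m,
          ‖sgdIter (fun i => gradient (f i)) α θ0 K ω
            - α • gradient (f i) (sgdIter (fun i => gradient (f i)) α θ0 K ω) - θs‖ ^ 2
        ≤ ∑ ω : Fin K → Fin m, (m:ℝ) * ((1 - α * μ) *
            ‖sgdIter (fun i => gradient (f i)) α θ0 K ω - θs‖ ^ 2 + α ^ 2 * σ ^ 2) :=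
      Finset.sum_le_sum fun ω _ => onestep _
    have hsum2 : ∑ ω : Fin K → Fin m, (m:ℝ) * ((1 - α * μ) *
          ‖sgdIter (fun i => gradient (f i)) α θ0 K ω - θs‖ ^ 2 + α ^ 2 * σ ^ 2)
        = (m:ℝ) * (1 - α * μ) *
            (∑ ω : Fin K → Fin m, ‖sgdIter (fun i => gradient (f i)) α θ0 K ω - θs‖ ^ 2)
          + (m:ℝ) ^ (K+1) * (α ^ 2 * σ ^ 2) := by
      simp only [mul_add, Finset.sum_add_distrib, ← Finset.mul_sum, Finset.sum_const, hcard,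
        nsmul_eq_mul]
      push_cast
      ring
    have hfinal := hle.trans_eq hsum2
    have hpos : (0:ℝ) < (m:ℝ) ^ (K+1) := by positivity
    rw [← sub_nonneg]
    have expand : (1 - α * μ) * (((m:ℝ) ^ K)⁻¹ * ∑ ω : Fin K → Fin m,
            ‖sgdIter (fun i => gradient (f i)) α θ0 K ω - θs‖ ^ 2) + α ^ 2 * σ ^ 2
          - ((m:ℝ) ^ (K+1))⁻¹ * ∑ ω : Fin K → Fin m, ∑ i : Fin m,
            ‖sgdIter (fun i => gradient (f i)) α θ0 K ω
              - α • gradient (f i) (sgdIter (fun i => gradient (f i)) α θ0 K ω) - θs‖ ^ 2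
        = ((m:ℝ) ^ (K+1))⁻¹ *
            (((m:ℝ) * (1 - α * μ) *
              (∑ ω : Fin K → Fin m, ‖sgdIter (fun i => gradient (f i)) α θ0 K ω - θs‖ ^ 2)
            + (m:ℝ) ^ (K+1) * (α ^ 2 * σ ^ 2))
          - ∑ ω : Fin K → Fin m, ∑ i : Fin m,
            ‖sgdIter (fun i => gradient (f i)) α θ0 K ω
              - α • gradient (f i) (sgdIter (fun i => gradient (f i)) α θ0 K ω) - θs‖ ^ 2) := by
      rw [mul_sub]
      congr 1
      rw [mul_add]
      rw [pow_succ]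
      field_simp
      ring
    rw [expand]
    apply mul_nonneg (by positivity)
    linarith [hfinal]
  have hαμ1 : 0 ≤ 1 - α * μ := by nlinarith [mul_le_mul_of_nonneg_left hμL hα.le]
  have hmain : ∀ K : ℕ,
      ((m:ℝ) ^ K)⁻¹ * ∑ ω : Fin K → Fin m,
          ‖sgdIter (fun i => gradient (f i)) α θ0 K ω - θs‖ ^ 2
        ≤ (1 - α * μ) ^ K * ‖θ0 - θs‖ ^ 2
          + α ^ 2 * σ ^ 2 * ∑ j ∈ Finset.range K, (1 - α * μ) ^ j := by
    intro K
    induction K with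
    | zero =>
        simp [sgdIter]
    | succ K ih =>
        calc ((m:ℝ) ^ (K+1))⁻¹ * ∑ ω : Fin (K+1) → Fin m,
              ‖sgdIter (fun i => gradient (f i)) α θ0 (K+1) ω - θs‖ ^ 2
            ≤ (1 - α * μ) * (((m:ℝ) ^ K)⁻¹ * ∑ ω : Fin K → Fin m,
                ‖sgdIter (fun i => gradient (f i)) α θ0 K ω - θs‖ ^ 2) + α ^ 2 * σ ^ 2 :=
              hrec K
          _ ≤ (1 - α * μ) * ((1 - α * μ) ^ K * ‖θ0 - θs‖ ^ 2
                + α ^ 2 * σ ^ 2 * ∑ j ∈ Finset.range K, (1 - α * μ) ^ j) + α ^ 2 * σ ^ 2 :=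
              add_le_add_left (mul_le_mul_of_nonneg_left ih hαμ1) _
          _ = (1 - α * μ) ^ (K+1) * ‖θ0 - θs‖ ^ 2
                + α ^ 2 * σ ^ 2 * ∑ j ∈ Finset.range (K+1), (1 - α * μ) ^ j := by
              rw [geom_sum_succ]
              ring
  have hgeom : ∑ j ∈ Finset.range k, (1 - α * μ) ^ j ≤ (α * μ)⁻¹ := by
    have hne : (1:ℝ) - α * μ ≠ 1 := by
      have : 0 < α * μ := mul_pos hα hμ
      intro hcon
      nlinarith [this]
    rw [geom_sum_eq hne, div_le_iff_of_neg (by nlinarith [mul_pos hα hμ] : (1:ℝ) - α * μ - 1 < 0)]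
    have hid : (α * μ)⁻¹ * (1 - α * μ - 1) = -1 := by
      field_simp
      ring
    rw [hid]
    linarith [pow_nonneg hαμ1 k]
  have hchain := hmain k
  have h1 : α ^ 2 * σ ^ 2 * (∑ j ∈ Finset.range k, (1 - α * μ) ^ j)
      ≤ α ^ 2 * σ ^ 2 * (α * μ)⁻¹ :=
    mul_le_mul_of_nonneg_left hgeom (by positivity)
  have h2 : α ^ 2 * σ ^ 2 * (α * μ)⁻¹ = (α / μ) * σ ^ 2 := by
    field_simp
  have h3 : (α / μ) * σ ^ 2 ≤ (2 * α / μ) * σ ^ 2 := by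
    apply mul_le_mul_of_nonneg_right _ hσ
    rw [div_le_div_iff₀ hμ hμ]
    nlinarith [hα, hμ]
  linarith [hchain, h1, h2 ▸ h1, h3]
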